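/- Let X be a complex Banach space, φ : X → X continuous linear, and m ≥ 1. The composition operator C_φ : P(^m X) → P(^m X) (with the sup norm) satisfies sup_n ‖C_φ^n‖ < ∞ if and only if sup_n ‖φ^n‖ < ∞, where φ^n and C_φ^n denote n-fold iterates. -/

import Mathlib

def IsHomogPoly {X : Type*} [NormedAddCommGroup X] [NormedSpace ℂ X] (m : ℕ) (p : X → ℂ) : Prop :=
  ∃ L : ContinuousMultilinearMap ℂ (fun _ : Fin m => X) ℂ, ∀ x, p x = L (fun _ => x)

noncomputable def polyNorm {X : Type*} [NormedAddCommGroup X] [NormedSpace ℂ X]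
    (p : X → ℂ) : ℝ :=
  ⨆ x : (Metric.closedBall (0 : X) 1), ‖p x‖

section Aux
variable {X : Type*} [NormedAddCommGroup X] [NormedSpace ℂ X]

instance : Nonempty (Metric.closedBall (0 : X) 1) := ⟨⟨0, by simp⟩⟩

omit [NormedSpace ℂ X] in
lemma mem_ball_norm {x : Metric.closedBall (0 : X) 1} : ‖(x : X)‖ ≤ 1 := by
  exact mem_closedBall_zero_iff.mp x.2

lemma aux_bdd {m : ℕ} {p : X → ℂ} (L : ContinuousMultilinearMap ℂ (fun _ : Fin m => X) ℂ)
    (hL : ∀ x, p x = L fun _ => x) :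
    BddAbove (Set.range fun y : Metric.closedBall (0 : X) 1 => ‖p (y : X)‖) := by
  refine ⟨‖L‖, ?_⟩
  rintro r ⟨y, rfl⟩
  dsimp only
  rw [hL]
  calc ‖L fun _ => (y : X)‖ ≤ ‖L‖ * ∏ _i : Fin m, ‖(y : X)‖ := L.le_opNorm _
    _ ≤ ‖L‖ * 1 :=
        mul_le_mul_of_nonneg_left
          (Finset.prod_le_one (fun _ _ => norm_nonneg _) (fun _ _ => mem_ball_norm))
          (norm_nonneg L)
    _ = ‖L‖ := mul_one _

lemma le_polyNorm {m : ℕ} {p : X → ℂ} (L : ContinuousMultilinearMap ℂ (fun _ : Fin m => X) ℂ)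
    (hL : ∀ x, p x = L fun _ => x) {x : X} (hx : ‖x‖ ≤ 1) : ‖p x‖ ≤ polyNorm p :=
  le_ciSup (aux_bdd L hL) (⟨x, by simpa [Metric.mem_closedBall, dist_eq_norm] using hx⟩ :
    Metric.closedBall (0 : X) 1)

lemma polyNorm_nonneg (p : X → ℂ) : 0 ≤ polyNorm p :=
  Real.iSup_nonneg fun _ => norm_nonneg _

lemma homog_smul {m : ℕ} {p : X → ℂ} (L : ContinuousMultilinearMap ℂ (fun _ : Fin m => X) ℂ)
    (hL : ∀ x, p x = L fun _ => x) (c : ℂ) (z : X) : p (c • z) = c ^ m * p z := by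
  rw [hL, hL]
  have := L.map_smul_univ (fun _ : Fin m => c) (fun _ : Fin m => z)
  simpa [smul_eq_mul] using this

lemma norm_le_scaled {m : ℕ} {p : X → ℂ} (L : ContinuousMultilinearMap ℂ (fun _ : Fin m => X) ℂ)
    (hL : ∀ x, p x = L fun _ => x) {D : ℝ} (hD : 1 ≤ D) {y : X} (hy : ‖y‖ ≤ D) :
    ‖p y‖ ≤ D ^ m * polyNorm p := by
  have hD0 : (0 : ℝ) < D := lt_of_lt_of_le one_pos hD
  have hDne : (D : ℂ) ≠ 0 := by exact_mod_cast hD0.ne'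
  set z : X := ((D : ℂ))⁻¹ • y with hz
  have hyz : y = (D : ℂ) • z := by
    rw [hz, smul_smul, mul_inv_cancel₀ hDne, one_smul]
  have hznorm : ‖z‖ ≤ 1 := by
    rw [hz, norm_smul]
    have : ‖((D : ℂ))⁻¹‖ = D⁻¹ := by
      rw [norm_inv]; norm_num [Complex.norm_real, abs_of_pos hD0]
    rw [this]
    rw [inv_mul_le_iff₀ hD0]
    linarith
  calc ‖p y‖ = ‖(D : ℂ) ^ m * p z‖ := by rw [hyz, homog_smul L hL]
    _ = D ^ m * ‖p z‖ := by
        rw [norm_mul, norm_pow]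
        norm_num [Complex.norm_real, abs_of_pos hD0]
    _ ≤ D ^ m * polyNorm p :=
        mul_le_mul_of_nonneg_left (le_polyNorm L hL hznorm) (by positivity)

end Aux

/-- The composition operator `C_φ` on `P(^m X)` is power bounded iff `φ` is power bounded. -/
theorem compOp_powerBounded_iff
    {X : Type*} [NormedAddCommGroup X] [NormedSpace ℂ X] [CompleteSpace X]
    (m : ℕ) (hm : 1 ≤ m) (φ : X →L[ℂ] X) :
    (∃ C : ℝ, ∀ (n : ℕ) (p : X → ℂ), IsHomogPoly m p →
        polyNorm (fun x => p ((φ ^ n) x)) ≤ C * polyNorm p) ↔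
      (∃ C : ℝ, ∀ n : ℕ, ‖φ ^ n‖ ≤ C) := by
  constructor
  · rintro ⟨C, hC⟩
    set M : ℝ := max (max C 0) 1 with hM
    have hM1 : (1 : ℝ) ≤ M := le_max_right _ _
    have hM0 : (0 : ℝ) ≤ M := le_trans zero_le_one hM1
    refine ⟨M, fun n => ?_⟩
    -- bound on the closed unit ball
    have key : ∀ y : X, ‖y‖ ≤ 1 → ‖(φ ^ n) y‖ ≤ M := by
      intro y hy
      by_cases hz : (φ ^ n) y = 0
      · rw [hz, norm_zero]; exact hM0
      · obtain ⟨f, hf1, hfy⟩ := exists_dual_vector ℂ ((φ ^ n) y) (norm_ne_zero_iff.mpr hz)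
        set p : X → ℂ := fun x => (f x) ^ m with hp
        set L : ContinuousMultilinearMap ℂ (fun _ : Fin m => X) ℂ :=
          (ContinuousMultilinearMap.mkPiAlgebra ℂ (Fin m) ℂ).compContinuousLinearMap
            (fun _ => f) with hLdef
        have hL : ∀ x, p x = L fun _ => x := by
          intro x
          simp [hp, hLdef, Finset.prod_const]
        have hpn : polyNorm p ≤ 1 := by
          apply ciSup_le
          intro x
          rw [hp]
          simp only [norm_pow]
          refine pow_le_one₀ (norm_nonneg _) ?_
          calc ‖f (x : X)‖ ≤ ‖f‖ * ‖(x : X)‖ := f.le_opNorm _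
            _ ≤ 1 * 1 := by
                have := mem_ball_norm (x := x)
                exact mul_le_mul (le_of_eq hf1) this (norm_nonneg _) zero_le_one
            _ = 1 := one_mul 1
        have hL' : ∀ x, (fun x => p ((φ ^ n) x)) x =
            (L.compContinuousLinearMap (fun _ => (φ ^ n : X →L[ℂ] X))) fun _ => x := by
          intro x; simp [hL]
        have h1 : ‖p ((φ ^ n) y)‖ ≤ polyNorm (fun x => p ((φ ^ n) x)) :=
          le_polyNorm _ hL' hy
        have h2 : polyNorm (fun x => p ((φ ^ n) x)) ≤ C * polyNorm p :=
          hC n p ⟨L, hL⟩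
        have h3 : C * polyNorm p ≤ max C 0 := by
          calc C * polyNorm p ≤ max C 0 * polyNorm p :=
                mul_le_mul_of_nonneg_right (le_max_left _ _) (polyNorm_nonneg p)
            _ ≤ max C 0 * 1 := by
                exact mul_le_mul_of_nonneg_left hpn (le_max_right _ _)
            _ = max C 0 := mul_one _
        have hval : ‖p ((φ ^ n) y)‖ = ‖(φ ^ n) y‖ ^ m := by
          rw [hp]
          simp only [norm_pow, hfy]
          norm_num [Complex.norm_real, abs_of_nonneg (norm_nonneg _)]
        have hpow : ‖(φ ^ n) y‖ ^ m ≤ max C 0 := by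
          rw [← hval]; exact le_trans h1 (le_trans h2 h3)
        by_cases hbig : ‖(φ ^ n) y‖ ≤ 1
        · exact le_trans hbig hM1
        · push_neg at hbig
          have : ‖(φ ^ n) y‖ ≤ ‖(φ ^ n) y‖ ^ m :=
            le_self_pow₀ hbig.le (by omega)
          exact le_trans this (le_trans hpow (le_max_left _ _))
    refine (φ ^ n).opNorm_le_bound hM0 fun x => ?_
    by_cases hx : x = 0
    · simp [hx]
    · have hxn : (0 : ℝ) < ‖x‖ := norm_pos_iff.mpr hx
      set u : X := ((‖x‖ : ℂ))⁻¹ • x with hu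
      have hune : (↑‖x‖ : ℂ) ≠ 0 := by exact_mod_cast hxn.ne'
      have hunorm : ‖u‖ ≤ 1 := by
        rw [hu, norm_smul, norm_inv]
        have h1 : ‖(↑‖x‖ : ℂ)‖ = ‖x‖ := by
          norm_num [Complex.norm_real, abs_of_pos hxn]
        rw [h1, inv_mul_cancel₀ hxn.ne']
      have hxu : x = (‖x‖ : ℂ) • u := by
        rw [hu, smul_smul, mul_inv_cancel₀ hune, one_smul]
      calc ‖(φ ^ n) x‖ = ‖(φ ^ n) ((‖x‖ : ℂ) • u)‖ := by rw [← hxu]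
        _ = ‖x‖ * ‖(φ ^ n) u‖ := by
            rw [map_smul, norm_smul]
            norm_num [Complex.norm_real, abs_of_pos hxn]
        _ ≤ ‖x‖ * M := by gcongr; exact key u hunorm
        _ = M * ‖x‖ := mul_comm _ _
  · rintro ⟨C, hC⟩
    set D : ℝ := max C 1 with hD
    have hD1 : (1 : ℝ) ≤ D := le_max_right _ _
    refine ⟨D ^ m, fun n p hp => ?_⟩
    obtain ⟨L, hL⟩ := hp
    apply ciSup_le
    intro x
    have hφx : ‖(φ ^ n) (x : X)‖ ≤ D := by
      calc ‖(φ ^ n) (x : X)‖ ≤ ‖φ ^ n‖ * ‖(x : X)‖ := (φ ^ n).le_opNorm _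
        _ ≤ C * 1 := mul_le_mul (hC n) mem_ball_norm (norm_nonneg _)
              (le_trans (norm_nonneg _) (hC n))
        _ ≤ D := by rw [mul_one]; exact le_max_left _ _
    exact norm_le_scaled L hL hD1 hφx
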